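/- Let P and Q be Borel probability measures on the real line with means m_P, m_Q and variances σ_P², σ_Q² respectively, and suppose m_P ≠ m_Q. Set a := m_P − m_Q. Then the Bhattacharyya coefficient satisfies ρ(P,Q) ≤ √(1 − a²/(a² + (σ_P + σ_Q)²)) = √((σ_P + σ_Q)²/(a² + (σ_P + σ_Q)²)). -/

import Mathlib

open MeasureTheory Real

/-- The Bhattacharyya coefficient `ρ(P,Q) = ∫ √(pq) dμ`, computed with respect to the
dominating measure `μ = P + Q` (the value is independent of the choice of dominating
measure). -/
noncomputable def bhattacharyya (P Q : Measure ℝ) : ℝ :=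
  ∫ x, Real.sqrt (((P.rnDeriv (P + Q)) x).toReal *
    ((Q.rnDeriv (P + Q)) x).toReal) ∂(P + Q)


lemma intAdd {α : Type*} {m : MeasurableSpace α} {μ : Measure α} {f g : α → ℝ}
    (hf : Integrable f μ) (hg : Integrable g μ) : Integrable (fun x => f x + g x) μ :=
  hf.add hg

lemma intSub {α : Type*} {m : MeasurableSpace α} {μ : Measure α} {f g : α → ℝ}
    (hf : Integrable f μ) (hg : Integrable g μ) : Integrable (fun x => f x - g x) μ :=
  hf.sub hg

/-- Cauchy–Schwarz for integrals of real functions. -/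
lemma integral_cauchy_schwarz {μ : Measure ℝ} {φ v : ℝ → ℝ}
    (hφ2 : Integrable (fun x => φ x ^ 2) μ) (hv2 : Integrable (fun x => v x ^ 2) μ)
    (hφv : Integrable (fun x => φ x * v x) μ) :
    (∫ x, φ x * v x ∂μ) ^ 2 ≤ (∫ x, φ x ^ 2 ∂μ) * (∫ x, v x ^ 2 ∂μ) := by
  have key : ∀ t : ℝ, 0 ≤ (∫ x, v x ^ 2 ∂μ) * (t * t) +
      (2 * ∫ x, φ x * v x ∂μ) * t + (∫ x, φ x ^ 2 ∂μ) := by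
    intro t
    have h0 : 0 ≤ ∫ x, (t * v x + φ x) ^ 2 ∂μ := integral_nonneg fun x => sq_nonneg _
    have hfe : (fun x => (t * v x + φ x) ^ 2)
        = fun x => (t * t) * (v x ^ 2) + (2 * t) * (φ x * v x) + φ x ^ 2 := by
      funext x; ring
    rw [hfe, integral_add (intAdd (hv2.const_mul (t*t)) (hφv.const_mul (2*t))) hφ2,
      integral_add (hv2.const_mul (t*t)) (hφv.const_mul (2*t)),
      integral_const_mul, integral_const_mul] at h0
    nlinarith [h0]
  have hd := discrim_le_zero key
  rw [discrim] at hd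
  nlinarith [hd]

/-- Transfer of integrals along the Radon–Nikodym derivative. -/
lemma rnDeriv_transfer {ν' ν : Measure ℝ} [IsFiniteMeasure ν'] [SigmaFinite ν]
    (hc : ν' ≪ ν) (h : ℝ → ℝ) (hh : Integrable h ν') :
    Integrable (fun x => (ν'.rnDeriv ν x).toReal * h x) ν ∧
    ∫ x, (ν'.rnDeriv ν x).toReal * h x ∂ν = ∫ x, h x ∂ν' := by
  constructor
  · have := (MeasureTheory.integrable_rnDeriv_smul_iff hc).mpr hh
    simpa [smul_eq_mul] using this
  · have := MeasureTheory.integral_rnDeriv_smul hc (f := h)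
    simpa [smul_eq_mul] using this

set_option maxHeartbeats 1000000 in
theorem bhattacharyya_upper_bound
    (P Q : Measure ℝ) [IsProbabilityMeasure P] [IsProbabilityMeasure Q]
    (mP mQ σP σQ : ℝ) (hσP : 0 ≤ σP) (hσQ : 0 ≤ σQ)
    (hP1 : Integrable (fun x => x) P) (hP2 : Integrable (fun x => x ^ 2) P)
    (hQ1 : Integrable (fun x => x) Q) (hQ2 : Integrable (fun x => x ^ 2) Q)
    (hmP : ∫ x, x ∂P = mP) (hmQ : ∫ x, x ∂Q = mQ)
    (hvP : ∫ x, (x - mP) ^ 2 ∂P = σP ^ 2) (hvQ : ∫ x, (x - mQ) ^ 2 ∂Q = σQ ^ 2)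
    (hne : mP ≠ mQ) :
    bhattacharyya P Q ≤
      Real.sqrt (1 - (mP - mQ) ^ 2 / ((mP - mQ) ^ 2 + (σP + σQ) ^ 2)) ∧
    Real.sqrt (1 - (mP - mQ) ^ 2 / ((mP - mQ) ^ 2 + (σP + σQ) ^ 2)) =
      Real.sqrt ((σP + σQ) ^ 2 / ((mP - mQ) ^ 2 + (σP + σQ) ^ 2)) := by
  have heq : 1 - (mP - mQ) ^ 2 / ((mP - mQ) ^ 2 + (σP + σQ) ^ 2)
      = (σP + σQ) ^ 2 / ((mP - mQ) ^ 2 + (σP + σQ) ^ 2) := by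
    have hδ : mP - mQ ≠ 0 := sub_ne_zero.mpr hne
    have hδ2 : 0 < (mP - mQ) ^ 2 := by
      rcases hδ.lt_or_gt with h | h <;> nlinarith
    have hpos : 0 < (mP - mQ) ^ 2 + (σP + σQ) ^ 2 := by nlinarith [sq_nonneg (σP + σQ)]
    field_simp
    ring
  refine ⟨?_, by rw [heq]⟩
  rw [heq]
  -- Setup
  set μ : Measure ℝ := P + Q with hμdef
  have hPμ : P ≪ μ := Measure.AbsolutelyContinuous.rfl.add_right Q
  have hQμ : Q ≪ μ := by
    rw [hμdef, add_comm]
    exact Measure.AbsolutelyContinuous.rfl.add_right P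
  set rP : ℝ → ℝ := fun x => (P.rnDeriv μ x).toReal with hrPdef
  set rQ : ℝ → ℝ := fun x => (Q.rnDeriv μ x).toReal with hrQdef
  set f : ℝ → ℝ := fun x => Real.sqrt (rP x) with hfdef
  set g : ℝ → ℝ := fun x => Real.sqrt (rQ x) with hgdef
  have hrP0 : ∀ x, 0 ≤ rP x := fun x => ENNReal.toReal_nonneg
  have hrQ0 : ∀ x, 0 ≤ rQ x := fun x => ENNReal.toReal_nonneg
  have hf2 : ∀ x, f x ^ 2 = rP x := fun x => Real.sq_sqrt (hrP0 x)
  have hg2 : ∀ x, g x ^ 2 = rQ x := fun x => Real.sq_sqrt (hrQ0 x)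
  have hf0 : ∀ x, 0 ≤ f x := fun x => Real.sqrt_nonneg _
  have hg0 : ∀ x, 0 ≤ g x := fun x => Real.sqrt_nonneg _
  have mrP : Measurable rP := (Measure.measurable_rnDeriv P μ).ennreal_toReal
  have mrQ : Measurable rQ := (Measure.measurable_rnDeriv Q μ).ennreal_toReal
  have mf : Measurable f := Real.continuous_sqrt.measurable.comp mrP
  have mg : Measurable g := Real.continuous_sqrt.measurable.comp mrQ
  -- transferred integrability / integrals
  have hP1' : Integrable (fun x : ℝ => x - mP) P := intSub hP1 (integrable_const _)
  have hQ1' : Integrable (fun x : ℝ => x - mQ) Q := intSub hQ1 (integrable_const _)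
  have hPsq : Integrable (fun x : ℝ => (x - mP) ^ 2) P := by
    have : (fun x : ℝ => (x - mP) ^ 2) = fun x => x ^ 2 - (2 * mP) * x + mP ^ 2 := by
      funext x; ring
    rw [this]
    exact intAdd (intSub hP2 (hP1.const_mul _)) (integrable_const _)
  have hQsq : Integrable (fun x : ℝ => (x - mQ) ^ 2) Q := by
    have : (fun x : ℝ => (x - mQ) ^ 2) = fun x => x ^ 2 - (2 * mQ) * x + mQ ^ 2 := by
      funext x; ring
    rw [this]
    exact intAdd (intSub hQ2 (hQ1.const_mul _)) (integrable_const _)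
  obtain ⟨intP1, iP1⟩ := rnDeriv_transfer hPμ _ (integrable_const (1 : ℝ))
  obtain ⟨intQ1, iQ1⟩ := rnDeriv_transfer hQμ _ (integrable_const (1 : ℝ))
  have iP1' : ∫ x, rP x ∂μ = 1 := by
    simpa using iP1
  have iQ1' : ∫ x, rQ x ∂μ = 1 := by
    simpa using iQ1
  have intP1' : Integrable rP μ := by simpa using intP1
  have intQ1' : Integrable rQ μ := by simpa using intQ1
  obtain ⟨intPu, iPu⟩ := rnDeriv_transfer hPμ _ hP1'
  obtain ⟨intQu, iQu⟩ := rnDeriv_transfer hQμ _ hQ1'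
  have iPu' : ∫ x, rP x * (x - mP) ∂μ = 0 := by
    rw [iPu, integral_sub hP1 (integrable_const _), hmP]
    simp
  have iQu' : ∫ x, rQ x * (x - mQ) ∂μ = 0 := by
    rw [iQu, integral_sub hQ1 (integrable_const _), hmQ]
    simp
  obtain ⟨intPv, iPv⟩ := rnDeriv_transfer hPμ _ hPsq
  obtain ⟨intQv, iQv⟩ := rnDeriv_transfer hQμ _ hQsq
  rw [hvP] at iPv
  rw [hvQ] at iQv
  obtain ⟨intPaP, _⟩ := rnDeriv_transfer hPμ _ hP1'.abs
  obtain ⟨intQaP, _⟩ := rnDeriv_transfer hQμ _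
    ((intSub hQ1 (integrable_const mP)).abs)
  obtain ⟨intPaQ, _⟩ := rnDeriv_transfer hPμ _
    ((intSub hP1 (integrable_const mQ)).abs)
  obtain ⟨intQaQ, _⟩ := rnDeriv_transfer hQμ _ hQ1'.abs
  -- pointwise AM-GM bound
  have hfg_le : ∀ x, f x * g x ≤ (rP x + rQ x) / 2 := by
    intro x
    nlinarith only [sq_nonneg (f x - g x), hf2 x, hg2 x]
  -- integrability of weighted cross terms
  have crossInt : ∀ w : ℝ → ℝ, Measurable w →
      Integrable (fun x => rP x * |w x|) μ → Integrable (fun x => rQ x * |w x|) μ →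
      Integrable (fun x => w x * (f x * g x)) μ := by
    intro w hw h1 h2
    refine Integrable.mono' (g := fun x => (rP x * |w x| + rQ x * |w x|) / 2) ((intAdd h1 h2).div_const 2) ?_ ?_
    · exact (hw.mul (mf.mul mg)).aestronglyMeasurable
    · filter_upwards with x
      have h3 : 0 ≤ f x * g x := mul_nonneg (hf0 x) (hg0 x)
      have h4 := hfg_le x
      have : ‖w x * (f x * g x)‖ = |w x| * (f x * g x) := by
        rw [norm_mul, Real.norm_eq_abs, Real.norm_eq_abs, abs_of_nonneg h3]
      rw [this]
      have h5 : |w x| * (f x * g x) ≤ |w x| * ((rP x + rQ x) / 2) :=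
        mul_le_mul_of_nonneg_left h4 (abs_nonneg _)
      calc |w x| * (f x * g x) ≤ |w x| * ((rP x + rQ x) / 2) := h5
        _ = (rP x * |w x| + rQ x * |w x|) / 2 := by ring
  have int_fg : Integrable (fun x => f x * g x) μ := by
    have := crossInt (fun _ => 1) measurable_const
      (by simpa using intP1') (by simpa using intQ1')
    simpa using this
  have int_uPfg : Integrable (fun x => (x - mP) * (f x * g x)) μ :=
    crossInt _ (measurable_id.sub measurable_const)
      (by simpa [abs_sub_comm] using intPaP) (by simpa using intQaP)
  have int_uQfg : Integrable (fun x => (x - mQ) * (f x * g x)) μ :=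
    crossInt _ (measurable_id.sub measurable_const)
      (by simpa using intPaQ) (by simpa using intQaQ)
  -- the key quantities
  set ρ : ℝ := ∫ x, f x * g x ∂μ with hρdef
  set A : ℝ := ∫ x, (x - mP) * (f x * g x) ∂μ with hAdef
  set B : ℝ := ∫ x, (x - mQ) * (f x * g x) ∂μ with hBdef
  have hρ0 : 0 ≤ ρ := integral_nonneg fun x => mul_nonneg (hf0 x) (hg0 x)
  -- identity : B - A = (mP - mQ) * ρ
  have hBA : B - A = (mP - mQ) * ρ := by
    rw [hBdef, hAdef, ← integral_sub int_uQfg int_uPfg]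
    have : (fun x => (x - mQ) * (f x * g x) - (x - mP) * (f x * g x))
        = fun x => (mP - mQ) * (f x * g x) := by funext x; ring
    rw [this, integral_const_mul]
  -- Cauchy-Schwarz I : B ^ 2 ≤ (1 - ρ ^ 2) * σQ ^ 2
  have hphiQ : ∀ x, (f x - ρ * g x) ^ 2
      = rP x - (2 * ρ) * (f x * g x) + ρ ^ 2 * rQ x := by
    intro x
    linear_combination hf2 x + ρ ^ 2 * hg2 x
  have intφ2 : Integrable (fun x => (f x - ρ * g x) ^ 2) μ := by
    have : (fun x => (f x - ρ * g x) ^ 2)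
        = fun x => rP x - (2 * ρ) * (f x * g x) + ρ ^ 2 * rQ x := funext hphiQ
    rw [this]
    exact intAdd (intSub intP1' (int_fg.const_mul (2*ρ))) (intQ1'.const_mul (ρ^2))
  have iφ2 : ∫ x, (f x - ρ * g x) ^ 2 ∂μ = 1 - ρ ^ 2 := by
    have : (fun x => (f x - ρ * g x) ^ 2)
        = fun x => rP x - (2 * ρ) * (f x * g x) + ρ ^ 2 * rQ x := funext hphiQ
    rw [this, integral_add (intSub intP1' (int_fg.const_mul (2*ρ))) (intQ1'.const_mul (ρ^2)),
      integral_sub intP1' (int_fg.const_mul (2*ρ)), integral_const_mul, integral_const_mul,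
      iP1', iQ1', ← hρdef]
    ring
  have hw0 : 0 ≤ 1 - ρ ^ 2 := by
    rw [← iφ2]; exact integral_nonneg fun x => sq_nonneg _
  -- squared Cauchy-Schwarz bounds
  have hBsq : B ^ 2 ≤ (1 - ρ ^ 2) * σQ ^ 2 := by
    have hv2eq : ∀ x, ((x - mQ) * g x) ^ 2 = rQ x * (x - mQ) ^ 2 := by
      intro x
      linear_combination (x - mQ) ^ 2 * hg2 x
    have intv2 : Integrable (fun x => ((x - mQ) * g x) ^ 2) μ := by
      have : (fun x => ((x - mQ) * g x) ^ 2) = fun x => rQ x * (x - mQ) ^ 2 := funext hv2eq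
      rw [this]; exact intQv
    have iv2 : ∫ x, ((x - mQ) * g x) ^ 2 ∂μ = σQ ^ 2 := by
      have : (fun x => ((x - mQ) * g x) ^ 2) = fun x => rQ x * (x - mQ) ^ 2 := funext hv2eq
      rw [this, iQv]
    have hφveq : ∀ x, (f x - ρ * g x) * ((x - mQ) * g x)
        = (x - mQ) * (f x * g x) - ρ * (rQ x * (x - mQ)) := by
      intro x
      linear_combination (-(ρ * (x - mQ))) * hg2 x
    have intφv : Integrable (fun x => (f x - ρ * g x) * ((x - mQ) * g x)) μ := by
      have : (fun x => (f x - ρ * g x) * ((x - mQ) * g x))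
          = fun x => (x - mQ) * (f x * g x) - ρ * (rQ x * (x - mQ)) := funext hφveq
      rw [this]
      exact intSub int_uQfg (intQu.const_mul ρ)
    have iφv : ∫ x, (f x - ρ * g x) * ((x - mQ) * g x) ∂μ = B := by
      have : (fun x => (f x - ρ * g x) * ((x - mQ) * g x))
          = fun x => (x - mQ) * (f x * g x) - ρ * (rQ x * (x - mQ)) := funext hφveq
      rw [this, integral_sub int_uQfg (intQu.const_mul ρ), integral_const_mul, iQu']
      simp [hBdef]
    have := integral_cauchy_schwarz intφ2 intv2 intφv
    rw [iφv, iφ2, iv2] at this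
    exact this
  have hAsq : A ^ 2 ≤ (1 - ρ ^ 2) * σP ^ 2 := by
    have hψeq : ∀ x, (g x - ρ * f x) ^ 2
        = rQ x - (2 * ρ) * (f x * g x) + ρ ^ 2 * rP x := by
      intro x
      linear_combination hg2 x + ρ ^ 2 * hf2 x
    have intψ2 : Integrable (fun x => (g x - ρ * f x) ^ 2) μ := by
      have : (fun x => (g x - ρ * f x) ^ 2)
          = fun x => rQ x - (2 * ρ) * (f x * g x) + ρ ^ 2 * rP x := funext hψeq
      rw [this]
      exact intAdd (intSub intQ1' (int_fg.const_mul (2*ρ))) (intP1'.const_mul (ρ^2))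
    have iψ2 : ∫ x, (g x - ρ * f x) ^ 2 ∂μ = 1 - ρ ^ 2 := by
      have : (fun x => (g x - ρ * f x) ^ 2)
          = fun x => rQ x - (2 * ρ) * (f x * g x) + ρ ^ 2 * rP x := funext hψeq
      rw [this, integral_add (intSub intQ1' (int_fg.const_mul (2*ρ))) (intP1'.const_mul (ρ^2)),
        integral_sub intQ1' (int_fg.const_mul (2*ρ)), integral_const_mul, integral_const_mul,
        iP1', iQ1', ← hρdef]
      ring
    have hu2eq : ∀ x, ((x - mP) * f x) ^ 2 = rP x * (x - mP) ^ 2 := by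
      intro x
      linear_combination (x - mP) ^ 2 * hf2 x
    have intu2 : Integrable (fun x => ((x - mP) * f x) ^ 2) μ := by
      have : (fun x => ((x - mP) * f x) ^ 2) = fun x => rP x * (x - mP) ^ 2 := funext hu2eq
      rw [this]; exact intPv
    have iu2 : ∫ x, ((x - mP) * f x) ^ 2 ∂μ = σP ^ 2 := by
      have : (fun x => ((x - mP) * f x) ^ 2) = fun x => rP x * (x - mP) ^ 2 := funext hu2eq
      rw [this, iPv]
    have hψueq : ∀ x, (g x - ρ * f x) * ((x - mP) * f x)
        = (x - mP) * (f x * g x) - ρ * (rP x * (x - mP)) := by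
      intro x
      linear_combination (-(ρ * (x - mP))) * hf2 x
    have intψu : Integrable (fun x => (g x - ρ * f x) * ((x - mP) * f x)) μ := by
      have : (fun x => (g x - ρ * f x) * ((x - mP) * f x))
          = fun x => (x - mP) * (f x * g x) - ρ * (rP x * (x - mP)) := funext hψueq
      rw [this]
      exact intSub int_uPfg (intPu.const_mul ρ)
    have iψu : ∫ x, (g x - ρ * f x) * ((x - mP) * f x) ∂μ = A := by
      have : (fun x => (g x - ρ * f x) * ((x - mP) * f x))
          = fun x => (x - mP) * (f x * g x) - ρ * (rP x * (x - mP)) := funext hψueq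
      rw [this, integral_sub int_uPfg (intPu.const_mul ρ), integral_const_mul, iPu']
      simp [hAdef]
    have := integral_cauchy_schwarz intψ2 intu2 intψu
    rw [iψu, iψ2, iu2] at this
    exact this
  -- combine
  set w : ℝ := 1 - ρ ^ 2 with hwdef
  have hABsq : (A * B) ^ 2 ≤ (w * σP * σQ) ^ 2 := by
    have h1 : A ^ 2 * B ^ 2 ≤ (w * σP ^ 2) * (w * σQ ^ 2) :=
      mul_le_mul hAsq hBsq (sq_nonneg B)
        (mul_nonneg hw0 (sq_nonneg σP))
    nlinarith only [h1]
  have htnn : 0 ≤ w * σP * σQ := mul_nonneg (mul_nonneg hw0 hσP) hσQ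
  have hABt : -(w * σP * σQ) ≤ A * B := by nlinarith only [hABsq, htnn]
  have hδρsq : ((mP - mQ) * ρ) ^ 2 = (B - A) ^ 2 := by rw [← hBA]
  have hsum : (B - A) ^ 2 ≤ w * (σP + σQ) ^ 2 := by nlinarith only [hAsq, hBsq, hABt]
  have key : ρ ^ 2 * ((mP - mQ) ^ 2 + (σP + σQ) ^ 2) ≤ (σP + σQ) ^ 2 := by
    have h2 : ((mP - mQ) * ρ) ^ 2 ≤ w * (σP + σQ) ^ 2 := by rw [hδρsq]; exact hsum
    rw [hwdef] at h2
    nlinarith only [h2]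
  -- finish
  have hδ : mP - mQ ≠ 0 := sub_ne_zero.mpr hne
  have hδ2 : 0 < (mP - mQ) ^ 2 := by
    rcases hδ.lt_or_gt with h | h <;> nlinarith only [h]
  have hpos : 0 < (mP - mQ) ^ 2 + (σP + σQ) ^ 2 := by
    nlinarith only [hδ2, sq_nonneg (σP + σQ)]
  have hbh : bhattacharyya P Q = ρ := by
    rw [hρdef]
    unfold bhattacharyya
    apply integral_congr_ae
    filter_upwards with x
    rw [hfdef, hgdef, hrPdef, hrQdef]
    exact Real.sqrt_mul ENNReal.toReal_nonneg _
  rw [hbh]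
  rw [show ((σP + σQ) ^ 2 / ((mP - mQ) ^ 2 + (σP + σQ) ^ 2) : ℝ)
      = (σP + σQ) ^ 2 / ((mP - mQ) ^ 2 + (σP + σQ) ^ 2) from rfl]
  refine (Real.le_sqrt hρ0 ?_).mpr ?_
  · positivity
  · rw [le_div_iff₀ hpos]
    exact key
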